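/- arXiv:2604.27227 — 2 statements merged into one kernel-verified Lean document; each statement's English description precedes it below -/
import Mathlib

section
/- Let 𝒢 = (V, ℰ) be a temporal digraph on n vertices whose footprint has cc connected components, and let p = |ℰ| + cc − n. Then p ≥ 0 and there exists a set S ⊆ V with |S| ≤ p that is a directed feedback vertex set of the reachability graph Reach(𝒢). -/
/-! Common definitions: temporal (di)graphs, journeys, footprints,
closed walks, the walk-Helly property, tree representations, etc. -/

variable {V : Type*}

/-- Underlying undirected simple graph of a digraph given by its arc relation. -/
def underGraph (A : V → V → Prop) : SimpleGraph V where
  Adj u v := u ≠ v ∧ (A u v ∨ A v u)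
  symm := ⟨fun _ _ h => ⟨h.1.symm, h.2.symm⟩⟩
  loopless := ⟨fun _ h => h.1 rfl⟩

/-- Number of connected components of a digraph (components of the underlying graph). -/
noncomputable def numComponents (A : V → V → Prop) : ℕ :=
  Nat.card (underGraph A).ConnectedComponent

/-- A directed circuit: a closed directed walk whose vertices are pairwise
distinct except for the repeated endpoint. -/
def IsCircuit (A : V → V → Prop) (k : ℕ) (w : ℕ → V) : Prop :=
  1 ≤ k ∧ w k = w 0 ∧ (∀ i < k, A (w i) (w (i + 1))) ∧
    ∀ i < k, ∀ j < k, w i = w j → i = j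

/-- A directed feedback vertex set: every circuit contains a vertex of `S`. -/
def IsDFVS (A : V → V → Prop) (S : Set V) : Prop :=
  ∀ (k : ℕ) (w : ℕ → V), IsCircuit A k w → ∃ i < k, w i ∈ S

/-- A valid finite set of temporal arcs: distinct endpoints, positive times. -/
def ValidDiTemporal (E : Finset ((V × V) × ℕ)) : Prop :=
  ∀ e ∈ E, e.1.1 ≠ e.1.2 ∧ 1 ≤ e.2

/-- A (strict) journey from `u` to `v` in a temporal digraph with arc set `E`. -/
def DiJourney (E : Set ((V × V) × ℕ)) (u v : V) : Prop :=
  ∃ (k : ℕ) (w : ℕ → V) (t : ℕ → ℕ),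
    1 ≤ k ∧ w 0 = u ∧ w k = v ∧
    (∀ i < k, ((w i, w (i + 1)), t i) ∈ E) ∧
    (∀ i, i + 1 < k → t i < t (i + 1))

/-- Arcs of the reachability graph of a temporal digraph. -/
def reachArc (E : Set ((V × V) × ℕ)) (u v : V) : Prop :=
  u ≠ v ∧ DiJourney E u v

/-- Arcs of the (directed) footprint of a temporal digraph. -/
def footArc (E : Set ((V × V) × ℕ)) (u v : V) : Prop :=
  ∃ t, ((u, v), t) ∈ E

/-- A valid finite set of undirected temporal edges: non-loop edges, positive times. -/
def ValidTemporal (E : Finset (Sym2 V × ℕ)) : Prop :=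
  ∀ e ∈ E, ¬ e.1.IsDiag ∧ 1 ≤ e.2

/-- A (strict) journey from `u` to `v` in an undirected temporal graph with edge set `E`. -/
def Journey (E : Set (Sym2 V × ℕ)) (u v : V) : Prop :=
  ∃ (k : ℕ) (w : ℕ → V) (t : ℕ → ℕ),
    1 ≤ k ∧ w 0 = u ∧ w k = v ∧
    (∀ i < k, (s(w i, w (i + 1)), t i) ∈ E) ∧
    (∀ i, i + 1 < k → t i < t (i + 1))

/-- The temporal graph with edge set `E` satisfies the request graph `A`. -/
def Satisfies (E : Set (Sym2 V × ℕ)) (A : V → V → Prop) : Prop :=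
  ∀ u v : V, A u v → Journey E u v

/-- Footprint of an undirected temporal graph. -/
def footprint (E : Set (Sym2 V × ℕ)) : SimpleGraph V where
  Adj u v := u ≠ v ∧ ∃ t, (s(u, v), t) ∈ E
  symm := by
    refine ⟨?_⟩
    intro u v h
    obtain ⟨h1, t, ht⟩ := h
    exact ⟨h1.symm, t, by rwa [Sym2.eq_swap]⟩
  loopless := ⟨fun _ h => h.1 rfl⟩

/-- A tree solution for the request graph `A`: a valid temporal graph satisfying
all the requests and whose footprint is a tree on the whole vertex set. -/
def IsTreeSolution (E : Finset (Sym2 V × ℕ)) (A : V → V → Prop) : Prop :=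
  ValidTemporal E ∧ Satisfies (↑E : Set (Sym2 V × ℕ)) A ∧
    (footprint (↑E : Set (Sym2 V × ℕ))).IsTree

/-- A closed directed walk of length `k ≥ 1` in the digraph `A`. -/
def IsClosedWalk (A : V → V → Prop) (k : ℕ) (w : ℕ → V) : Prop :=
  1 ≤ k ∧ w k = w 0 ∧ ∀ i < k, A (w i) (w (i + 1))

/-- Vertex set of a walk of length `k`. -/
def walkSet (k : ℕ) (w : ℕ → V) : Set V := {x | ∃ i < k, w i = x}

/-- `S` is the vertex set of some closed walk of `A`. -/
def IsWalkSet (A : V → V → Prop) (S : Set V) : Prop :=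
  ∃ (k : ℕ) (w : ℕ → V), IsClosedWalk A k w ∧ S = walkSet k w

/-- The digraph `A` is walk-Helly: every (nonempty) family of vertex sets of
closed walks that pairwise intersect has a common vertex. -/
def WalkHelly (A : V → V → Prop) : Prop :=
  ∀ 𝒮 : Set (Set V), 𝒮.Nonempty → (∀ S ∈ 𝒮, IsWalkSet A S) →
    (∀ S ∈ 𝒮, ∀ S' ∈ 𝒮, (S ∩ S').Nonempty) → (⋂₀ 𝒮).Nonempty

/-- A tree representation of the digraph `A`: a tree on the vertex set such that the
vertex set of every closed walk of `A` induces a connected subgraph. -/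
def IsTreeRep (A : V → V → Prop) (T : SimpleGraph V) : Prop :=
  T.IsTree ∧ ∀ S : Set V, IsWalkSet A S → (T.induce S).Connected

/-- `(u, v)` is an authorized arc of `A`: there is no vertex `x` lying both on a
closed walk through `u` avoiding `v` and on a closed walk through `v` avoiding `u`. -/
def IsAuthorized (A : V → V → Prop) (u v : V) : Prop :=
  ¬ ∃ x : V, (∃ S, IsWalkSet A S ∧ u ∈ S ∧ x ∈ S ∧ v ∉ S) ∧
             (∃ S, IsWalkSet A S ∧ v ∈ S ∧ x ∈ S ∧ u ∉ S)

/-- The undirected graph of forced edges of `A` (pairs with arcs in both directions). -/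
def forcedGraph (A : V → V → Prop) : SimpleGraph V where
  Adj u v := u ≠ v ∧ A u v ∧ A v u
  symm := ⟨fun _ _ h => ⟨h.1.symm, h.2.2, h.2.1⟩⟩
  loopless := ⟨fun _ h => h.1 rfl⟩

open SimpleGraph

section Lemmas
variable [DecidableEq V] {E : Finset ((V × V) × ℕ)} {e : (V × V) × ℕ}

lemma tmono {k : ℕ} {t : ℕ → ℕ} (h : ∀ i, i + 1 < k → t i < t (i + 1)) :
    ∀ {p q : ℕ}, p < q → q < k → t p < t q := by
  intro p q hpq hqk
  induction q with
  | zero => omega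
  | succ q ih =>
    rcases Nat.lt_succ_iff_lt_or_eq.mp hpq with h' | h'
    · exact (ih h' (by omega)).trans (h q hqk)
    · subst h'; exact h p hqk

lemma journey_reach (hE : ValidDiTemporal E) {u v : V}
    (hJ : DiJourney (↑E : Set ((V × V) × ℕ)) u v) :
    (underGraph (footArc (↑E : Set ((V × V) × ℕ)))).Reachable u v := by
  obtain ⟨k, w, t, hk, hw0, hwk, harc, -⟩ := hJ
  have aux : ∀ j, j ≤ k →
      (underGraph (footArc (↑E : Set ((V × V) × ℕ)))).Reachable (w 0) (w j) := by
    intro j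
    induction j with
    | zero => intro _; exact Reachable.refl _
    | succ j ih =>
      intro hj
      have h1 := harc j (by omega)
      have hne := (hE _ (Finset.mem_coe.mp h1)).1
      exact (ih (by omega)).trans (Adj.reachable ⟨hne, Or.inl ⟨t j, h1⟩⟩)
  have := aux k le_rfl
  rwa [hw0, hwk] at this

lemma journey_split (hmax : ∀ e' ∈ E, e'.2 ≤ e.2) {u v : V}
    (hJ : DiJourney (↑E : Set ((V × V) × ℕ)) u v) :
    DiJourney (↑(E.erase e) : Set ((V × V) × ℕ)) u v ∨
      (v = e.1.2 ∧ (u = e.1.1 ∨ DiJourney (↑(E.erase e) : Set ((V × V) × ℕ)) u e.1.1)) := by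
  obtain ⟨k, w, t, hk, hw0, hwk, harc, hmono⟩ := hJ
  by_cases hall : ∀ i < k, ((w i, w (i + 1)), t i) ≠ e
  · exact Or.inl ⟨k, w, t, hk, hw0, hwk, fun i hi =>
      Finset.mem_coe.mpr (Finset.mem_erase.mpr ⟨hall i hi, Finset.mem_coe.mp (harc i hi)⟩),
      hmono⟩
  push_neg at hall
  obtain ⟨i, hik, heq⟩ := hall
  have hti : t i = e.2 := congrArg Prod.snd heq
  have hwi : w i = e.1.1 := congrArg (fun x => x.1.1) heq
  have hwi1 : w (i + 1) = e.1.2 := congrArg (fun x => x.1.2) heq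
  have hlast : i + 1 = k := by
    by_contra h
    have h1 : i + 1 < k := by omega
    have h2 := hmono i h1
    have h3 := hmax _ (Finset.mem_coe.mp (harc (i + 1) h1))
    omega
  refine Or.inr ⟨by rw [← hwk, ← hlast, hwi1], ?_⟩
  by_cases hi0 : i = 0
  · subst hi0; exact Or.inl (hw0.symm.trans hwi)
  · refine Or.inr ⟨i, w, t, Nat.one_le_iff_ne_zero.mpr hi0, hw0, hwi, ?_, ?_⟩
    · intro j hj
      refine Finset.mem_coe.mpr (Finset.mem_erase.mpr ⟨?_, Finset.mem_coe.mp (harc j (by omega))⟩)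
      intro hc
      have : t j = e.2 := congrArg Prod.snd hc
      have : t j < t i := tmono hmono hj (by omega)
      omega
    · intro j hj; exact hmono j (by omega)

lemma reach_split {G G' : SimpleGraph V} {a b : V}
    (h : ∀ u v, G.Adj u v → G'.Adj u v ∨ (u = a ∧ v = b) ∨ (u = b ∧ v = a)) {u v : V}
    (hr : G.Reachable u v) :
    G'.Reachable u v ∨ (G'.Reachable u a ∧ G'.Reachable b v) ∨
      (G'.Reachable u b ∧ G'.Reachable a v) := by
  obtain ⟨p⟩ := hr
  induction p with
  | nil => exact Or.inl (Reachable.refl _)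
  | @cons x y z hxy p ih =>
    rcases h _ _ hxy with h1 | ⟨hx, hy⟩ | ⟨hx, hy⟩
    · rcases ih with h2 | ⟨h2, h3⟩ | ⟨h2, h3⟩
      · exact Or.inl (h1.reachable.trans h2)
      · exact Or.inr (Or.inl ⟨h1.reachable.trans h2, h3⟩)
      · exact Or.inr (Or.inr ⟨h1.reachable.trans h2, h3⟩)
    · subst hx; subst hy
      rcases ih with h2 | ⟨h2, h3⟩ | ⟨h2, h3⟩
      · exact Or.inr (Or.inl ⟨Reachable.refl _, h2⟩)
      · exact Or.inr (Or.inl ⟨Reachable.refl _, h3⟩)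
      · exact Or.inl h3
    · subst hx; subst hy
      rcases ih with h2 | ⟨h2, h3⟩ | ⟨h2, h3⟩
      · exact Or.inr (Or.inr ⟨Reachable.refl _, h2⟩)
      · exact Or.inl h3
      · exact Or.inr (Or.inr ⟨Reachable.refl _, h3⟩)

lemma adj_split (he : e ∈ E) :
    ∀ u v, (underGraph (footArc (↑E : Set ((V × V) × ℕ)))).Adj u v →
      (underGraph (footArc (↑(E.erase e) : Set ((V × V) × ℕ)))).Adj u v ∨
        (u = e.1.1 ∧ v = e.1.2) ∨ (u = e.1.2 ∧ v = e.1.1) := by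
  rintro u v ⟨hne, h | h⟩ <;> obtain ⟨t', ht'⟩ := h
  · by_cases heq : ((u, v), t') = e
    · exact Or.inr (Or.inl ⟨congrArg (fun x => x.1.1) heq, congrArg (fun x => x.1.2) heq⟩)
    · exact Or.inl ⟨hne, Or.inl ⟨t', Finset.mem_coe.mpr
        (Finset.mem_erase.mpr ⟨heq, Finset.mem_coe.mp ht'⟩)⟩⟩
  · by_cases heq : ((v, u), t') = e
    · exact Or.inr (Or.inr ⟨congrArg (fun x => x.1.2) heq, congrArg (fun x => x.1.1) heq⟩)
    · exact Or.inl ⟨hne, Or.inr ⟨t', Finset.mem_coe.mpr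
        (Finset.mem_erase.mpr ⟨heq, Finset.mem_coe.mp ht'⟩)⟩⟩

lemma under_mono (he : e ∈ E) :
    underGraph (footArc (↑(E.erase e) : Set ((V × V) × ℕ))) ≤
      underGraph (footArc (↑E : Set ((V × V) × ℕ))) := by
  rintro u v ⟨hne, h | h⟩ <;> obtain ⟨t', ht'⟩ := h
  · exact ⟨hne, Or.inl ⟨t', Finset.mem_coe.mpr (Finset.mem_of_mem_erase (Finset.mem_coe.mp ht'))⟩⟩
  · exact ⟨hne, Or.inr ⟨t', Finset.mem_coe.mpr (Finset.mem_of_mem_erase (Finset.mem_coe.mp ht'))⟩⟩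

end Lemmas

section CC
variable [DecidableEq V] [Fintype V] {E : Finset ((V × V) × ℕ)} {e : (V × V) × ℕ}

noncomputable instance (G : SimpleGraph V) : Finite G.ConnectedComponent :=
  Quot.finite _

/-- (α): if the endpoints of `e` remain connected after erasing `e`,
the number of components doesn't increase when erasing. -/
lemma cc_erase_le (he : e ∈ E)
    (hab : (underGraph (footArc (↑(E.erase e) : Set ((V × V) × ℕ)))).Reachable e.1.1 e.1.2) :
    Nat.card (underGraph (footArc (↑(E.erase e) : Set ((V × V) × ℕ)))).ConnectedComponent ≤
      Nat.card (underGraph (footArc (↑E : Set ((V × V) × ℕ)))).ConnectedComponent := by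
  set G' := underGraph (footArc (↑(E.erase e) : Set ((V × V) × ℕ)))
  set G := underGraph (footArc (↑E : Set ((V × V) × ℕ)))
  have key : ∀ u v : V, G.Reachable u v → G'.Reachable u v := by
    intro u v hr
    rcases reach_split (adj_split he) hr with h | ⟨h1, h2⟩ | ⟨h1, h2⟩
    · exact h
    · exact (h1.trans hab).trans h2
    · exact (h1.trans hab.symm).trans h2
  have hinj : Function.Injective
      (SimpleGraph.ConnectedComponent.map (Hom.ofLE (under_mono he)) :
        G'.ConnectedComponent → G.ConnectedComponent) := by
    intro x y
    refine SimpleGraph.ConnectedComponent.ind₂ (fun v w h => ?_) x y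
    rw [SimpleGraph.ConnectedComponent.map_mk, SimpleGraph.ConnectedComponent.map_mk] at h
    exact SimpleGraph.ConnectedComponent.eq.mpr
      (key v w (SimpleGraph.ConnectedComponent.eq.mp h))
  exact Nat.card_le_card_of_injective _ hinj

/-- (β): erasing one arc increases the number of components by at most 1. -/
lemma cc_erase_le_succ (he : e ∈ E) :
    Nat.card (underGraph (footArc (↑(E.erase e) : Set ((V × V) × ℕ)))).ConnectedComponent ≤
      Nat.card (underGraph (footArc (↑E : Set ((V × V) × ℕ)))).ConnectedComponent + 1 := by
  classical
  set G' := underGraph (footArc (↑(E.erase e) : Set ((V × V) × ℕ)))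
  set G := underGraph (footArc (↑E : Set ((V × V) × ℕ)))
  set f : G'.ConnectedComponent → G.ConnectedComponent :=
    SimpleGraph.ConnectedComponent.map (Hom.ofLE (under_mono he)) with hf
  set g : G'.ConnectedComponent → G.ConnectedComponent ⊕ Unit := fun x =>
    if x = G'.connectedComponentMk e.1.2 then Sum.inr () else Sum.inl (f x) with hg
  have hginj : Function.Injective g := by
    intro x y hxy
    by_cases hx : x = G'.connectedComponentMk e.1.2 <;>
      by_cases hy : y = G'.connectedComponentMk e.1.2
    · rw [hx, hy]
    · simp [hg, hx, hy] at hxy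
    · simp [hg, hx, hy] at hxy
    · simp only [hg, hx, hy, if_neg, if_neg] at hxy
      have hfxy : f x = f y := Sum.inl.inj hxy
      revert hx hy hfxy
      refine SimpleGraph.ConnectedComponent.ind₂ (fun v u hx hy hfxy => ?_) x y
      rw [hf, SimpleGraph.ConnectedComponent.map_mk, SimpleGraph.ConnectedComponent.map_mk] at hfxy
      have hr : G.Reachable v u := SimpleGraph.ConnectedComponent.eq.mp hfxy
      rcases reach_split (adj_split he) hr with h | ⟨h1, h2⟩ | ⟨h1, h2⟩
      · exact SimpleGraph.ConnectedComponent.eq.mpr h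
      · exact absurd (SimpleGraph.ConnectedComponent.eq.mpr h2.symm) hy
      · exact absurd (SimpleGraph.ConnectedComponent.eq.mpr h1) hx
  calc Nat.card G'.ConnectedComponent ≤ Nat.card (G.ConnectedComponent ⊕ Unit) :=
        Nat.card_le_card_of_injective _ hginj
    _ = Nat.card G.ConnectedComponent + 1 := by simp [Nat.card_sum]

lemma cc_empty :
    Nat.card (underGraph (footArc (↑(∅ : Finset ((V × V) × ℕ)) : Set ((V × V) × ℕ)))).ConnectedComponent
      = Fintype.card V := by
  set G := underGraph (footArc (↑(∅ : Finset ((V × V) × ℕ)) : Set ((V × V) × ℕ)))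
  have hbij : Function.Bijective (G.connectedComponentMk) := by
    constructor
    · intro u v h
      have hr : G.Reachable u v := SimpleGraph.ConnectedComponent.eq.mp h
      obtain ⟨p⟩ := hr
      cases p with
      | nil => rfl
      | cons h _ =>
        obtain ⟨-, h | h⟩ := h <;> obtain ⟨t', ht'⟩ := h <;> simp at ht'
    · exact Quot.mk_surjective
  rw [← Nat.card_eq_of_bijective _ hbij, Nat.card_eq_fintype_card]

lemma chain_reach {G' : SimpleGraph V} {w : ℕ → V} {s : ℕ} :
    ∀ f, s ≤ f → (∀ j, s ≤ j → j < f → G'.Reachable (w j) (w (j + 1))) →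
      G'.Reachable (w s) (w f) := by
  intro f
  induction f with
  | zero => intro h _; have : s = 0 := by omega
            subst this; exact Reachable.refl _
  | succ f ih =>
    intro hsf hstep
    rcases Nat.lt_succ_iff_lt_or_eq.mp (Nat.lt_succ_of_le hsf) with h | h
    · exact (ih (by omega) (fun j h1 h2 => hstep j h1 (by omega))).trans
        (hstep f (by omega) (by omega))
    · subst h; exact Reachable.refl _

lemma main_goal :
    ∀ (N : ℕ) (E : Finset ((V × V) × ℕ)), E.card ≤ N → ValidDiTemporal E →
      Fintype.card V ≤ E.card + numComponents (footArc (↑E : Set ((V × V) × ℕ))) ∧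
      ∃ S : Finset V,
        S.card ≤ E.card + numComponents (footArc (↑E : Set ((V × V) × ℕ))) - Fintype.card V ∧
        IsDFVS (reachArc (↑E : Set ((V × V) × ℕ))) (↑S : Set V) := by
  have hempty : ∀ (E : Finset ((V × V) × ℕ)), E = ∅ →
      Fintype.card V ≤ E.card + numComponents (footArc (↑E : Set ((V × V) × ℕ))) ∧
      ∃ S : Finset V,
        S.card ≤ E.card + numComponents (footArc (↑E : Set ((V × V) × ℕ))) - Fintype.card V ∧
        IsDFVS (reachArc (↑E : Set ((V × V) × ℕ))) (↑S : Set V) := by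
    rintro E rfl
    constructor
    · have := cc_empty (V := V); simp only [numComponents] at *; omega
    · refine ⟨∅, by simp, ?_⟩
      rintro k w ⟨hk, -, harc, -⟩
      obtain ⟨-, k', w', t', hk', -, -, hmem, -⟩ := harc 0 (by omega)
      have := hmem 0 (by omega)
      simp at this
  intro N
  induction N with
  | zero =>
    intro E hcard hE
    exact hempty E (Finset.card_eq_zero.mp (Nat.le_zero.mp hcard))
  | succ N ih =>
    intro E hcard hE
    rcases eq_or_ne E ∅ with rfl | hne
    · exact hempty _ rfl
    -- pick an arc with maximum time
    obtain ⟨e, he, hmax⟩ := E.exists_max_image (fun x => x.2) (Finset.nonempty_of_ne_empty hne)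
    set E' := E.erase e with hE'def
    have hE' : ValidDiTemporal E' := fun x hx => hE x (Finset.mem_of_mem_erase hx)
    have hcard' : E'.card + 1 = E.card := Finset.card_erase_add_one he
    obtain ⟨ih1, S', hS'card, hS'⟩ := ih E' (by omega) hE'
    set a := e.1.1
    set b := e.1.2
    set c := numComponents (footArc (↑E : Set ((V × V) × ℕ))) with hc
    set c' := numComponents (footArc (↑E' : Set ((V × V) × ℕ))) with hc'
    have hccle : c' ≤ c + 1 := cc_erase_le_succ he
    have hpart1 : Fintype.card V ≤ E.card + c := by omega
    refine ⟨hpart1, ?_⟩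
    by_cases hab : (underGraph (footArc (↑E' : Set ((V × V) × ℕ)))).Reachable a b
    · -- case (i): components unchanged; S = insert b S'
      have hcle : c' ≤ c := cc_erase_le he hab
      refine ⟨insert b S', ?_, ?_⟩
      · calc (insert b S').card ≤ S'.card + 1 := Finset.card_insert_le _ _
          _ ≤ E'.card + c' - Fintype.card V + 1 := by omega
          _ ≤ E.card + c - Fintype.card V := by omega
      · -- DFVS property
        intro k w hcirc
        obtain ⟨hk, hclose, harc, hinj⟩ := hcirc
        by_contra hcon
        push_neg at hcon
        -- every journey avoids e, since journeys using e end at b ∈ S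
        have harc' : ∀ i < k, reachArc (↑E' : Set ((V × V) × ℕ)) (w i) (w (i + 1)) := by
          intro i hi
          obtain ⟨hne2, hJ⟩ := harc i hi
          rcases journey_split hmax hJ with h | ⟨hvb, -⟩
          · exact ⟨hne2, h⟩
          · exfalso
            have hbS : b ∈ (↑(insert b S') : Set V) := by simp
            rcases Nat.lt_or_ge (i + 1) k with h1 | h1
            · exact hcon (i + 1) h1 (hvb ▸ hbS)
            · have : i + 1 = k := by omega
              have h0 : w 0 = b := by rw [← hclose, ← this, hvb]
              exact hcon 0 (by omega) (h0 ▸ hbS)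
        obtain ⟨i, hik, hiS⟩ := hS' k w ⟨hk, hclose, harc', hinj⟩
        exact hcon i hik (by simp [Finset.mem_coe.mp hiS])
    · -- case (ii): erasing e disconnects a from b; S = S'
      refine ⟨S', ?_, ?_⟩
      · omega
      · intro k w hcirc
        obtain ⟨hk, hclose, harc, hinj⟩ := hcirc
        by_contra hcon
        push_neg at hcon
        by_cases hall : ∀ i < k, DiJourney (↑E' : Set ((V × V) × ℕ)) (w i) (w (i + 1))
        · obtain ⟨i, hik, hiS⟩ := hS' k w
            ⟨hk, hclose, fun i hi => ⟨(harc i hi).1, hall i hi⟩, hinj⟩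
          exact hcon i hik hiS
        · push_neg at hall
          obtain ⟨i₀, hi₀k, hi₀⟩ := hall
          have hsplit₀ := journey_split (e := e) hmax (harc i₀ hi₀k).2
          rcases hsplit₀ with h | ⟨hvb, hua⟩
          · exact hi₀ h
          -- hvb : w (i₀+1) = b
          have hnotb : ∀ j < k, j ≠ i₀ → w (j + 1) ≠ b := by
            intro j hjk hji hjb
            rcases Nat.lt_or_ge (i₀ + 1) k with h1 | h1
            · rcases Nat.lt_or_ge (j + 1) k with h2 | h2
              · exact hji (Nat.succ_injective
                  (hinj (j + 1) h2 (i₀ + 1) h1 (hjb.trans hvb.symm)))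
              · have hjk' : j + 1 = k := by omega
                have h0 : w 0 = w (i₀ + 1) := by
                  rw [← hclose, ← hjk', hjb, hvb]
                exact absurd (hinj 0 (by omega) (i₀ + 1) h1 h0) (by omega)
            · have hik' : i₀ + 1 = k := by omega
              rcases Nat.lt_or_ge (j + 1) k with h2 | h2
              · have h0 : w (j + 1) = w 0 := by
                  rw [← hclose, ← hik']; exact hjb.trans hvb.symm
                exact absurd (hinj (j + 1) h2 0 (by omega) h0) (by omega)
              · exact hji (by omega)
          have hstep : ∀ j < k, j ≠ i₀ →
              (underGraph (footArc (↑E' : Set ((V × V) × ℕ)))).Reachable (w j) (w (j + 1)) := by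
            intro j hjk hji
            rcases journey_split (e := e) hmax (harc j hjk).2 with h | ⟨h, -⟩
            · exact journey_reach hE' h
            · exact absurd h (hnotb j hjk hji)
          -- reach from b = w (i₀+1) around the circuit to w i₀, then to a
          have hr1 : (underGraph (footArc (↑E' : Set ((V × V) × ℕ)))).Reachable (w (i₀ + 1)) (w k) :=
            chain_reach k (by omega) (fun j h1 h2 => hstep j h2 (by omega))
          have hr2 : (underGraph (footArc (↑E' : Set ((V × V) × ℕ)))).Reachable (w 0) (w i₀) :=
            chain_reach i₀ (by omega) (fun j h1 h2 => hstep j (by omega) (by omega))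
          have hr3 : (underGraph (footArc (↑E' : Set ((V × V) × ℕ)))).Reachable (w i₀) a := by
            rcases hua with h | h
            · rw [h]
            · exact journey_reach hE' h
          have : (underGraph (footArc (↑E' : Set ((V × V) × ℕ)))).Reachable b a := by
            have := (hr1.trans (hclose ▸ hr2)).trans hr3
            rwa [hvb] at this
          exact hab this.symm


/-- for a temporal digraph on `n` vertices whose footprint has `cc`
connected components, `p = |ℰ| + cc - n ≥ 0` and there is a DFVS of the
reachability graph of size at most `p`. -/
theorem stmt2 {V : Type*} [Fintype V] [DecidableEq V]
    (E : Finset ((V × V) × ℕ)) (hE : ValidDiTemporal E) :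
    Fintype.card V ≤ E.card + numComponents (footArc (↑E : Set ((V × V) × ℕ))) ∧
    ∃ S : Finset V,
      S.card ≤ E.card + numComponents (footArc (↑E : Set ((V × V) × ℕ))) -
        Fintype.card V ∧
      IsDFVS (reachArc (↑E : Set ((V × V) × ℕ))) (↑S : Set V) := by
  exact main_goal E.card E le_rfl hE
end CC
end

section
/- Let R = (V, A) be a connected digraph. Then R is walk-Helly if and only if there exists a tree representation of R. -/
/-! Common definitions: temporal (di)graphs, journeys, footprints,
closed walks, the walk-Helly property, tree representations, etc. -/

variable {V : Type*}

set_option linter.unusedSectionVars false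

section Stmt7AuxSection
namespace Stmt7Aux

def UC (𝒟 : Set (Set V)) : Prop :=
  ∀ W ∈ 𝒟, ∀ W' ∈ 𝒟, (W ∩ W').Nonempty → W ∪ W' ∈ 𝒟

def HellyFam (𝒟 : Set (Set V)) : Prop :=
  ∀ 𝒮 : Set (Set V), (∀ S ∈ 𝒮, S ∈ 𝒟) → 𝒮.Nonempty →
    (∀ S ∈ 𝒮, ∀ S' ∈ 𝒮, (S ∩ S').Nonempty) → (⋂₀ 𝒮).Nonempty


lemma walkSet_nonempty {A : V → V → Prop} {k : ℕ} {w : ℕ → V} (h : IsClosedWalk A k w) :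
    (walkSet k w).Nonempty := ⟨w 0, 0, h.1, rfl⟩

lemma isWalkSet_nonempty {A : V → V → Prop} {S : Set V} (h : IsWalkSet A S) : S.Nonempty := by
  obtain ⟨k, w, hw, rfl⟩ := h; exact walkSet_nonempty hw

lemma arc_mod {A : V → V → Prop} {k : ℕ} {w : ℕ → V} (h : IsClosedWalk A k w) (j : ℕ) :
    A (w (j % k)) (w ((j + 1) % k)) := by
  obtain ⟨hk, hcl, harc⟩ := h
  have hkpos : 0 < k := hk
  have hr : j % k < k := Nat.mod_lt _ hkpos
  have hstep : (j + 1) % k = (j % k + 1) % k := by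
    have := (Nat.mod_modEq j k).add_right 1
    exact this.symm
  rcases eq_or_lt_of_le (Nat.succ_le_of_lt hr) with he | hlt
  · have hgoal : (j % k + 1) % k = 0 := by
      have : j % k + 1 = k := he
      rw [this, Nat.mod_self]
    rw [hstep, hgoal]
    have h3 := harc (j % k) hr
    have h4 : w (j % k + 1) = w 0 := by
      have : j % k + 1 = k := he
      rw [this, hcl]
    rwa [h4] at h3
  · rw [hstep, Nat.mod_eq_of_lt hlt]
    exact harc (j % k) hr

lemma closedWalk_rotate {A : V → V → Prop} {k : ℕ} {w : ℕ → V} (h : IsClosedWalk A k w)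
    (i0 : ℕ) (hi0 : i0 < k) :
    IsClosedWalk A k (fun t => w ((i0 + t) % k)) ∧
      walkSet k (fun t => w ((i0 + t) % k)) = walkSet k w := by
  have hkpos : 0 < k := h.1
  constructor
  · refine ⟨h.1, ?_, ?_⟩
    · simp only []
      rw [Nat.add_mod_right, Nat.mod_eq_of_lt hi0, Nat.add_zero, Nat.mod_eq_of_lt hi0]
    · intro i _
      have := arc_mod h (i0 + i)
      simpa [Nat.add_assoc] using this
  · ext x
    constructor
    · rintro ⟨i, _, rfl⟩
      exact ⟨(i0 + i) % k, Nat.mod_lt _ hkpos, rfl⟩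
    · rintro ⟨i, hi, rfl⟩
      refine ⟨(i + k - i0) % k, Nat.mod_lt _ hkpos, ?_⟩
      simp only []
      have h1 : (i0 + (i + k - i0) % k) % k = (i0 + (i + k - i0)) % k :=
        ((Nat.mod_modEq (i + k - i0) k).add_left i0)
      rw [h1]
      have h2 : i0 + (i + k - i0) = i + k := by omega
      rw [h2, Nat.add_mod_right, Nat.mod_eq_of_lt hi]

lemma closedWalk_concat {A : V → V → Prop} {k1 k2 : ℕ} {w1 w2 : ℕ → V}
    (h1 : IsClosedWalk A k1 w1) (h2 : IsClosedWalk A k2 w2) (hstart : w1 0 = w2 0) :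
    IsClosedWalk A (k1 + k2) (fun t => if t < k1 then w1 t else w2 (t - k1)) ∧
      walkSet (k1 + k2) (fun t => if t < k1 then w1 t else w2 (t - k1)) =
        walkSet k1 w1 ∪ walkSet k2 w2 := by
  obtain ⟨hk1, hcl1, harc1⟩ := h1
  obtain ⟨hk2, hcl2, harc2⟩ := h2
  constructor
  · refine ⟨by omega, ?_, ?_⟩
    · simp only []
      rw [if_neg (by omega), if_pos (by omega)]
      have : k1 + k2 - k1 = k2 := by omega
      rw [this, hcl2, ← hstart]
    · intro i hi
      simp only []
      by_cases hc : i < k1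
      · rw [if_pos hc]
        by_cases hc2 : i + 1 < k1
        · rw [if_pos hc2]; exact harc1 i hc
        · rw [if_neg hc2]
          have : i + 1 = k1 := by omega
          have e : i + 1 - k1 = 0 := by omega
          rw [e, ← hstart, ← hcl1, ← this]
          exact harc1 i hc
      · rw [if_neg hc, if_neg (by omega)]
        have e : i + 1 - k1 = (i - k1) + 1 := by omega
        rw [e]
        exact harc2 (i - k1) (by omega)
  · ext x
    constructor
    · rintro ⟨i, hi, rfl⟩
      simp only []
      by_cases hc : i < k1
      · rw [if_pos hc]; exact Or.inl ⟨i, hc, rfl⟩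
      · rw [if_neg hc]; exact Or.inr ⟨i - k1, by omega, rfl⟩
    · rintro (⟨i, hi, rfl⟩ | ⟨i, hi, rfl⟩)
      · exact ⟨i, by omega, by simp only [if_pos hi]⟩
      · refine ⟨k1 + i, by omega, ?_⟩
        simp only []
        rw [if_neg (by omega)]
        congr 1
        omega

lemma isWalkSet_union {A : V → V → Prop} {S S' : Set V} (hS : IsWalkSet A S)
    (hS' : IsWalkSet A S') (hx : (S ∩ S').Nonempty) : IsWalkSet A (S ∪ S') := by
  obtain ⟨x, hxS, hxS'⟩ := hx
  obtain ⟨k1, w1, hw1, rfl⟩ := hS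
  obtain ⟨k2, w2, hw2, rfl⟩ := hS'
  obtain ⟨i1, hi1, hxe1⟩ := hxS
  obtain ⟨i2, hi2, hxe2⟩ := hxS'
  obtain ⟨hw1', hset1⟩ := closedWalk_rotate hw1 i1 hi1
  obtain ⟨hw2', hset2⟩ := closedWalk_rotate hw2 i2 hi2
  have hstart : (fun t => w1 ((i1 + t) % k1)) 0 = (fun t => w2 ((i2 + t) % k2)) 0 := by
    simp only []
    rw [Nat.add_zero, Nat.add_zero, Nat.mod_eq_of_lt hi1, Nat.mod_eq_of_lt hi2, hxe1, hxe2]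
  obtain ⟨hw3, hset3⟩ := closedWalk_concat hw1' hw2' hstart
  exact ⟨_, _, hw3, by rw [hset3, hset1, hset2]⟩



def Gv (𝒟 : Set (Set V)) (v : V) : Set (Set V) := {W | W ∈ 𝒟 ∧ v ∈ W ∧ W ≠ {v}}

lemma exists_ne_of_ne_singleton {W : Set V} {v : V} (hv : v ∈ W) (h : W ≠ {v}) :
    ∃ y ∈ W, y ≠ v := by
  by_contra h'
  push_neg at h'
  apply h
  ext x
  exact ⟨fun hx => h' x hx, fun hx => hx ▸ hv⟩

lemma sUnion_union_mem {𝒟 : Set (Set V)} (hUC : UC 𝒟) {B : Set V} (hB : B ∈ 𝒟)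
    (hBne : B.Nonempty) (𝒞 : Set (Set V)) (hfin : 𝒞.Finite)
    (h : ∀ Y ∈ 𝒞, Y ∈ 𝒟 ∧ B ⊆ Y) : ⋃₀ 𝒞 ∪ B ∈ 𝒟 := by
  revert h
  refine Set.Finite.induction_on
    (motive := fun 𝒞 _ => (∀ Y ∈ 𝒞, Y ∈ 𝒟 ∧ B ⊆ Y) → ⋃₀ 𝒞 ∪ B ∈ 𝒟) _ hfin
    (fun _ => by simpa using hB) ?_
  intro a s _ _ ih h
  · have hmem := h a (Set.mem_insert _ _)
    have ihs := ih (fun Y hY => h Y (Set.mem_insert_of_mem _ hY))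
    have heq : ⋃₀ insert a s ∪ B = (⋃₀ s ∪ B) ∪ a := by
      rw [Set.sUnion_insert, Set.union_assoc, Set.union_comm a]
    rw [heq]
    apply hUC _ ihs _ hmem.1
    obtain ⟨b, hb⟩ := hBne
    exact ⟨b, Or.inr hb, hmem.2 hb⟩

theorem leaf_lemma [Fintype V] [DecidableEq V] : ∀ (n : ℕ) (U : Finset V) (𝒟 : Set (Set V)) (m : V),
    U.card ≤ n →
    (∀ W ∈ 𝒟, W.Nonempty ∧ W ⊆ (U : Set V)) → UC 𝒟 → HellyFam 𝒟 →
    m ∈ U → 2 ≤ U.card →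
    ∃ v ∈ U, ∃ u ∈ U, v ≠ m ∧ u ≠ v ∧ ∀ W ∈ 𝒟, v ∈ W → W ≠ {v} → u ∈ W := by
  intro n
  induction n with
  | zero => intro U 𝒟 m hle _ _ _ _ h2; omega
  | succ n IH =>
    intro U 𝒟 m hle hmem hUC hHelly hm h2
    by_cases hcase1 : ∃ v ∈ U, v ≠ m ∧ ¬(Gv 𝒟 v).Nonempty
    · obtain ⟨v, hvU, hvm, hv⟩ := hcase1
      refine ⟨v, hvU, m, hm, hvm, Ne.symm hvm, fun W hW hvW hWne => absurd ⟨W, hW, hvW, hWne⟩ hv⟩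
    by_cases hcase2 : ∃ v ∈ U, ∃ u ∈ U, v ≠ m ∧ u ≠ v ∧ ∀ W ∈ Gv 𝒟 v, u ∈ W
    · obtain ⟨v, hvU, u, huU, hvm, huv, hv⟩ := hcase2
      exact ⟨v, hvU, u, huU, hvm, huv, fun W hW hvW hWne => hv W ⟨hW, hvW, hWne⟩⟩
    have P3 : ∀ v ∈ U, v ≠ m → (Gv 𝒟 v).Nonempty ∧ ∀ u, u ≠ v → ∃ W ∈ Gv 𝒟 v, u ∉ W := by
      intro v hv hvm
      have hne : (Gv 𝒟 v).Nonempty := by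
        by_contra h
        exact hcase1 ⟨v, hv, hvm, h⟩
      refine ⟨hne, fun u hu => ?_⟩
      by_cases huU : u ∈ U
      · by_contra hno
        push_neg at hno
        exact hcase2 ⟨v, hv, u, huU, hvm, hu, hno⟩
      · obtain ⟨W, hW⟩ := hne
        obtain ⟨hWD, hvW, hWne⟩ := hW
        exact ⟨W, ⟨hWD, hvW, hWne⟩, fun huW => huU ((hmem W hWD).2 huW)⟩
    have hU3 : 3 ≤ U.card := by
      by_contra h
      have h2' : U.card = 2 := by omega
      obtain ⟨a, b, hab, hU⟩ := Finset.card_eq_two.mp h2'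
      have hvUm : ∃ v ∈ U, v ≠ m := by
        rcases Finset.mem_insert.mp (hU ▸ hm) with rfl | hb'
        · exact ⟨b, by simp [hU], Ne.symm hab⟩
        · have : m = b := by simpa using hb'
          exact ⟨a, by simp [hU], fun h => hab (h ▸ this.symm ▸ rfl)⟩
      obtain ⟨v, hvU, hvm⟩ := hvUm
      obtain ⟨W, hW, hmW⟩ := (P3 v hvU hvm).2 m (Ne.symm hvm)
      obtain ⟨hWD, hvW, hWne⟩ := hW
      apply hWne
      apply Set.eq_singleton_iff_unique_mem.mpr
      refine ⟨hvW, fun x hx => ?_⟩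
      have hxU : x ∈ U := (hmem W hWD).2 hx
      have hxab : x = a ∨ x = b := by simpa [hU] using hxU
      have hmab : m = a ∨ m = b := by simpa [hU] using hm
      have hvab : v = a ∨ v = b := by simpa [hU] using hvU
      have hxm : x ≠ m := fun h => hmW (h ▸ hx)
      clear hmW hx hxU hWD hvW hWne hmem hUC hHelly hcase1 hcase2 P3 IH hU hle h2 h h2' hm hvU
      rcases hxab with rfl | rfl <;> rcases hmab with rfl | rfl <;>
        rcases hvab with rfl | rfl <;> tauto
    -- the main construction, common to cases (a) and (b)
    have key : ∀ z ∈ U, ((Gv 𝒟 z).Nonempty ∧ ∀ u, u ≠ z → ∃ W ∈ Gv 𝒟 z, u ∉ W) →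
        (z = m ∨ ¬(Gv 𝒟 m).Nonempty) →
        ∃ v ∈ U, ∃ u ∈ U, v ≠ m ∧ u ≠ v ∧ ∀ W ∈ 𝒟, v ∈ W → W ≠ {v} → u ∈ W := by
      intro z hzU hPz hzm
      -- find v₀ ∉ {z, m}
      have hcard1 : 1 ≤ ((U.erase m).erase z).card := by
        have h1 : U.card - 1 ≤ (U.erase m).card := Finset.pred_card_le_card_erase
        have h2' : (U.erase m).card - 1 ≤ ((U.erase m).erase z).card :=
          Finset.pred_card_le_card_erase
        omega
      obtain ⟨v₀, hv₀⟩ := Finset.card_pos.mp (by omega : 0 < ((U.erase m).erase z).card)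
      have hv₀z : v₀ ≠ z := (Finset.mem_erase.mp hv₀).1
      have hv₀m : v₀ ≠ m := (Finset.mem_erase.mp (Finset.mem_of_mem_erase hv₀)).1
      have hv₀U : v₀ ∈ U := Finset.mem_of_mem_erase (Finset.mem_of_mem_erase hv₀)
      obtain ⟨B, hBG, hzB⟩ := (P3 v₀ hv₀U hv₀m).2 z (Ne.symm hv₀z)
      obtain ⟨hBD, hv₀B, hBne1⟩ := hBG
      obtain ⟨b₁, hb₁B, hb₁v₀⟩ := exists_ne_of_ne_singleton hv₀B hBne1
      set Z : Set (Set V) := {W | W ∈ 𝒟 ∧ z ∉ W ∧ ∃ x ∈ W, ∃ y ∈ W, x ≠ y} with hZdef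
      set R : Set V → Set V → Prop :=
        fun W1 W2 => W1 ∈ Z ∧ W2 ∈ Z ∧ (W1 ∩ W2).Nonempty with hRdef
      have hBZ : B ∈ Z := ⟨hBD, hzB, v₀, hv₀B, b₁, hb₁B, Ne.symm hb₁v₀⟩
      set C : Set (Set V) := {W | Relation.ReflTransGen R B W ∧ W ∈ Z} with hCdef
      set Bstar : Set V := ⋃₀ C with hBstardef
      have hBC : B ∈ C := ⟨Relation.ReflTransGen.refl, hBZ⟩
      have hBsub : B ⊆ Bstar := fun x hx => ⟨B, hBC, hx⟩
      have hzBstar : z ∉ Bstar := by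
        rintro ⟨W, ⟨_, _, hzW, _⟩, hzW'⟩
        exact hzW hzW'
      have hCsub : ∀ W ∈ C, W ⊆ Bstar := fun W hW x hx => ⟨W, hW, hx⟩
      have hclosed : ∀ W ∈ Z, (W ∩ Bstar).Nonempty → W ⊆ Bstar := by
        rintro W hWZ ⟨x, hxW, W', hW'C, hxW'⟩
        obtain ⟨hW'rt, hW'Z⟩ := hW'C
        exact hCsub W ⟨hW'rt.tail ⟨hW'Z, hWZ, x, hxW', hxW⟩, hWZ⟩
      have hBstarD : Bstar ∈ 𝒟 := by
        have claim1 : ∀ W, Relation.ReflTransGen R B W →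
            ∃ Y, Y ∈ 𝒟 ∧ B ⊆ Y ∧ W ⊆ Y ∧ Y ⊆ Bstar := by
          intro W h
          induction h with
          | refl => exact ⟨B, hBD, Set.Subset.refl _, Set.Subset.refl _, hBsub⟩
          | @tail Wb Wc hBb hbc ih =>
            obtain ⟨Y, hYD, hBY, hbY, hYsub⟩ := ih
            obtain ⟨hbZ, hcZ, hbcne⟩ := hbc
            have hcD : Wc ∈ 𝒟 := by
              obtain ⟨h1, _, _⟩ := hcZ
              exact h1
            obtain ⟨x, hxb, hxc⟩ := hbcne
            refine ⟨Y ∪ Wc, hUC Y hYD Wc hcD ⟨x, hbY hxb, hxc⟩,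
              fun y hy => Or.inl (hBY hy), fun y hy => Or.inr hy, ?_⟩
            intro y hy
            rcases hy with hy | hy
            · exact hYsub hy
            · exact hCsub Wc ⟨hBb.tail ⟨hbZ, hcZ, x, hxb, hxc⟩, hcZ⟩ hy
        have h1 : ⋃₀ {Y : Set V | Y ∈ 𝒟 ∧ B ⊆ Y ∧ Y ⊆ Bstar} ∪ B = Bstar := by
          apply Set.Subset.antisymm
          · rintro x (⟨Y, hY, hxY⟩ | hxB)
            · obtain ⟨_, _, hYsub⟩ := hY
              exact hYsub hxY
            · exact hBsub hxB
          · rintro x ⟨W, hWC, hxW⟩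
            obtain ⟨hWrt, _⟩ := hWC
            obtain ⟨Y, hYD, hBY, hWY, hYsub⟩ := claim1 W hWrt
            exact Or.inl ⟨Y, ⟨hYD, hBY, hYsub⟩, hWY hxW⟩
        rw [← h1]
        apply sUnion_union_mem hUC hBD ⟨v₀, hv₀B⟩ _ (Set.toFinite _)
        rintro Y ⟨hYD, hBY, _⟩
        exact ⟨hYD, hBY⟩
      have hBstarU : Bstar ⊆ (U : Set V) := by
        rintro x ⟨W, ⟨_, hWZ⟩, hxW⟩
        obtain ⟨hWD, _, _⟩ := hWZ
        exact (hmem W hWD).2 hxW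
      have hmBstar : m ∉ Bstar := by
        rcases hzm with rfl | hGm
        · exact hzBstar
        · rintro ⟨W, ⟨_, hWZ⟩, hmW⟩
          obtain ⟨hWD, hzW, x, hxW, y, hyW, hxy⟩ := hWZ
          apply hGm
          refine ⟨W, hWD, hmW, fun hWm => ?_⟩
          rw [hWm] at hxW hyW
          exact hxy (hxW.trans hyW.symm)
      set 𝒳 : Set (Set V) :=
        {X | X ∈ 𝒟 ∧ z ∈ X ∧ X ≠ {z} ∧ (X ∩ Bstar).Nonempty} with h𝒳def
      -- Helly application to get the gateway vertex w
      have hFsub : ∀ S ∈ insert Bstar {Y : Set V | ∃ W' ∈ Gv 𝒟 z, ∃ X ∈ 𝒳, Y = W' ∪ X},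
          S ∈ 𝒟 := by
        rintro S (rfl | ⟨W', hW', X, hX, rfl⟩)
        · exact hBstarD
        · obtain ⟨hW'D, hzW', _⟩ := hW'
          obtain ⟨hXD, hzX, _, _⟩ := hX
          exact hUC W' hW'D X hXD ⟨z, hzW', hzX⟩
      have hFpair : ∀ S ∈ insert Bstar {Y : Set V | ∃ W' ∈ Gv 𝒟 z, ∃ X ∈ 𝒳, Y = W' ∪ X},
          ∀ S' ∈ insert Bstar {Y : Set V | ∃ W' ∈ Gv 𝒟 z, ∃ X ∈ 𝒳, Y = W' ∪ X},
          (S ∩ S').Nonempty := by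
        rintro S hS S' hS'
        rcases hS with rfl | ⟨W1, hW1, X1, hX1, rfl⟩ <;>
          rcases hS' with rfl | ⟨W2, hW2, X2, hX2, rfl⟩
        · exact ⟨v₀, hBsub hv₀B, hBsub hv₀B⟩
        · obtain ⟨_, _, _, x, hxX2, hxB⟩ := hX2
          exact ⟨x, hxB, Or.inr hxX2⟩
        · obtain ⟨_, _, _, x, hxX1, hxB⟩ := hX1
          exact ⟨x, Or.inr hxX1, hxB⟩
        · obtain ⟨_, hzW1, _⟩ := hW1
          obtain ⟨_, hzW2, _⟩ := hW2
          exact ⟨z, Or.inl hzW1, Or.inl hzW2⟩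
      obtain ⟨w, hw⟩ := hHelly _ hFsub ⟨Bstar, Set.mem_insert _ _⟩ hFpair
      have hwBstar : w ∈ Bstar := hw _ (Set.mem_insert _ _)
      have hwWX : ∀ W' ∈ Gv 𝒟 z, ∀ X ∈ 𝒳, w ∈ W' ∪ X := fun W' hW' X hX =>
        hw _ (Set.mem_insert_of_mem _ ⟨W', hW', X, hX, rfl⟩)
      have hwz : w ≠ z := fun h => hzBstar (h ▸ hwBstar)
      have hw𝒳 : ∀ X ∈ 𝒳, w ∈ X := by
        intro X hX
        obtain ⟨Wav, hWavG, hwWav⟩ := hPz.2 w hwz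
        rcases hwWX Wav hWavG X hX with h | h
        · exact absurd h hwWav
        · exact h
      -- the reduced family on Bstar
      set E : Set (Set V) :=
        {W | (W ∈ 𝒟 ∧ W ⊆ Bstar) ∨ ∃ X ∈ 𝒳, W = X ∩ Bstar} with hEdef
      set Bf : Finset V := (Set.toFinite Bstar).toFinset with hBfdef
      have hBfmem : ∀ x, x ∈ Bf ↔ x ∈ Bstar := fun x => Set.Finite.mem_toFinset _
      have hmemE : ∀ W ∈ E, W.Nonempty ∧ W ⊆ (Bf : Set V) := by
        have hBfcoe : (Bf : Set V) = Bstar := Set.Finite.coe_toFinset _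
        rw [hBfcoe]
        rintro W (⟨hWD, hWB⟩ | ⟨X, hX, rfl⟩)
        · exact ⟨(hmem W hWD).1, hWB⟩
        · obtain ⟨_, _, _, hXB⟩ := hX
          exact ⟨hXB, Set.inter_subset_right⟩
      have hUCE : UC E := by
        rintro W1 hW1 W2 hW2 hint
        rcases hW1 with ⟨hW1D, hW1B⟩ | ⟨X1, hX1, rfl⟩ <;>
          rcases hW2 with ⟨hW2D, hW2B⟩ | ⟨X2, hX2, rfl⟩
        · exact Or.inl ⟨hUC _ hW1D _ hW2D hint, Set.union_subset hW1B hW2B⟩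
        · obtain ⟨hX2D, hzX2, hX2ne, hX2B⟩ := hX2
          obtain ⟨x, hx1, hx2, hxB⟩ := hint
          refine Or.inr ⟨W1 ∪ X2, ⟨hUC _ hW1D _ hX2D ⟨x, hx1, hx2⟩, Or.inr hzX2, ?_,
            ⟨x, Or.inl hx1, hW1B hx1⟩⟩, ?_⟩
          · intro he
            have hxz : x = z := by
              have : x ∈ ({z} : Set V) := he ▸ (Or.inl hx1 : x ∈ W1 ∪ X2)
              exact this
            exact hzBstar (hxz ▸ hW1B hx1)
          · ext y
            constructor
            · rintro (hy | ⟨hy, hyB⟩)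
              · exact ⟨Or.inl hy, hW1B hy⟩
              · exact ⟨Or.inr hy, hyB⟩
            · rintro ⟨hy | hy, hyB⟩
              · exact Or.inl hy
              · exact Or.inr ⟨hy, hyB⟩
        · obtain ⟨hX1D, hzX1, hX1ne, hX1B⟩ := hX1
          obtain ⟨x, ⟨hx1, hxB⟩, hx2⟩ := hint
          refine Or.inr ⟨X1 ∪ W2, ⟨hUC _ hX1D _ hW2D ⟨x, hx1, hx2⟩, Or.inl hzX1, ?_,
            ⟨x, Or.inl hx1, hxB⟩⟩, ?_⟩
          · intro he
            have hxz : x = z := by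
              have : x ∈ ({z} : Set V) := he ▸ (Or.inl hx1 : x ∈ X1 ∪ W2)
              exact this
            exact hzBstar (hxz ▸ hxB)
          · ext y
            constructor
            · rintro (⟨hy, hyB⟩ | hy)
              · exact ⟨Or.inl hy, hyB⟩
              · exact ⟨Or.inr hy, hW2B hy⟩
            · rintro ⟨hy | hy, hyB⟩
              · exact Or.inl ⟨hy, hyB⟩
              · exact Or.inr hy
        · obtain ⟨hX1D, hzX1, hX1ne, hX1B⟩ := hX1
          obtain ⟨hX2D, hzX2, hX2ne, hX2B⟩ := hX2
          obtain ⟨x, ⟨hx1, hxB⟩, hx2, _⟩ := hint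
          obtain ⟨y1, hy1X1, hy1z⟩ := exists_ne_of_ne_singleton hzX1 hX1ne
          refine Or.inr ⟨X1 ∪ X2, ⟨hUC _ hX1D _ hX2D ⟨x, hx1, hx2⟩, Or.inl hzX1, ?_,
            ⟨x, Or.inl hx1, hxB⟩⟩, (Set.union_inter_distrib_right _ _ _).symm⟩
          intro he
          have : y1 ∈ ({z} : Set V) := he ▸ (Or.inl hy1X1 : y1 ∈ X1 ∪ X2)
          exact hy1z this
      have hHellyE : HellyFam E := by
        intro 𝒮 h𝒮E h𝒮ne h𝒮pair
        have hrep : ∀ S ∈ 𝒮, (S ∈ 𝒟 ∧ S ⊆ Bstar ∧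
            S ∈ {W : Set V | (W ∈ 𝒟 ∧ W ⊆ Bstar ∧ W ∈ 𝒮) ∨ (W ∈ 𝒳 ∧ W ∩ Bstar ∈ 𝒮)}) ∨
            (∃ X, X ∈ 𝒳 ∧ S = X ∩ Bstar ∧
              X ∈ {W : Set V | (W ∈ 𝒟 ∧ W ⊆ Bstar ∧ W ∈ 𝒮) ∨ (W ∈ 𝒳 ∧ W ∩ Bstar ∈ 𝒮)}) := by
          intro S hS
          rcases h𝒮E S hS with ⟨hSD, hSB⟩ | ⟨X, hX, rfl⟩
          · exact Or.inl ⟨hSD, hSB, Or.inl ⟨hSD, hSB, hS⟩⟩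
          · exact Or.inr ⟨X, hX, rfl, Or.inr ⟨hX, hS⟩⟩
        have hhat1 : ∀ W ∈ {W : Set V | (W ∈ 𝒟 ∧ W ⊆ Bstar ∧ W ∈ 𝒮) ∨
            (W ∈ 𝒳 ∧ W ∩ Bstar ∈ 𝒮)}, W ∈ 𝒟 := by
          rintro W (⟨hWD, _, _⟩ | ⟨hW𝒳, _⟩)
          · exact hWD
          · obtain ⟨h1, _, _⟩ := hW𝒳
            exact h1
        have hhat2 : ({W : Set V | (W ∈ 𝒟 ∧ W ⊆ Bstar ∧ W ∈ 𝒮) ∨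
            (W ∈ 𝒳 ∧ W ∩ Bstar ∈ 𝒮)}).Nonempty := by
          obtain ⟨S, hS⟩ := h𝒮ne
          rcases hrep S hS with ⟨_, _, h⟩ | ⟨X, _, _, h⟩
          · exact ⟨S, h⟩
          · exact ⟨X, h⟩
        have hhat3 : ∀ W1 ∈ {W : Set V | (W ∈ 𝒟 ∧ W ⊆ Bstar ∧ W ∈ 𝒮) ∨
            (W ∈ 𝒳 ∧ W ∩ Bstar ∈ 𝒮)}, ∀ W2 ∈ {W : Set V | (W ∈ 𝒟 ∧ W ⊆ Bstar ∧ W ∈ 𝒮) ∨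
            (W ∈ 𝒳 ∧ W ∩ Bstar ∈ 𝒮)}, (W1 ∩ W2).Nonempty := by
          have hWS : ∀ W ∈ {W : Set V | (W ∈ 𝒟 ∧ W ⊆ Bstar ∧ W ∈ 𝒮) ∨
              (W ∈ 𝒳 ∧ W ∩ Bstar ∈ 𝒮)}, ∃ S ∈ 𝒮, S ⊆ W := by
            rintro W (⟨_, _, hW⟩ | ⟨_, hW⟩)
            · exact ⟨W, hW, Set.Subset.refl _⟩
            · exact ⟨W ∩ Bstar, hW, Set.inter_subset_left⟩
          intro W1 hW1 W2 hW2
          obtain ⟨S1, hS1, hS1W⟩ := hWS W1 hW1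
          obtain ⟨S2, hS2, hS2W⟩ := hWS W2 hW2
          obtain ⟨x, hx1, hx2⟩ := h𝒮pair S1 hS1 S2 hS2
          exact ⟨x, hS1W hx1, hS2W hx2⟩
        obtain ⟨p, hp⟩ := hHelly
            {W : Set V | (W ∈ 𝒟 ∧ W ⊆ Bstar ∧ W ∈ 𝒮) ∨ (W ∈ 𝒳 ∧ W ∩ Bstar ∈ 𝒮)}
            hhat1 hhat2 hhat3
        by_cases hpB : p ∈ Bstar
        · refine ⟨p, ?_⟩
          rintro S hS
          rcases hrep S hS with ⟨_, _, h⟩ | ⟨X, _, rfl, h⟩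
          · exact hp S h
          · exact ⟨hp X h, hpB⟩
        · refine ⟨w, ?_⟩
          rintro S hS
          rcases hrep S hS with ⟨_, hSB, h⟩ | ⟨X, hX𝒳, rfl, h⟩
          · exact absurd (hSB (hp S h)) hpB
          · exact ⟨hw𝒳 X hX𝒳, hwBstar⟩
      have hBfcard2 : 2 ≤ Bf.card := by
        have : 1 < Bf.card := Finset.one_lt_card.mpr
          ⟨v₀, (hBfmem v₀).mpr (hBsub hv₀B), b₁, (hBfmem b₁).mpr (hBsub hb₁B), Ne.symm hb₁v₀⟩
        omega
      have hBfle : Bf.card ≤ n := by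
        have hsub : Bf ⊆ U.erase z := by
          intro x hx
          have hxB : x ∈ Bstar := (hBfmem x).mp hx
          exact Finset.mem_erase.mpr ⟨fun h => hzBstar (h ▸ hxB), hBstarU hxB⟩
        have h1 := Finset.card_le_card hsub
        have h2' := Finset.card_erase_of_mem hzU
        omega
      have hwBf : w ∈ Bf := (hBfmem w).mpr hwBstar
      obtain ⟨v, hvBf, u, huBf, hvw, huv, hleaf⟩ :=
        IH Bf E w hBfle hmemE hUCE hHellyE hwBf hBfcard2
      have hvBstar : v ∈ Bstar := (hBfmem v).mp hvBf
      have huBstar : u ∈ Bstar := (hBfmem u).mp huBf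
      refine ⟨v, hBstarU hvBstar, u, hBstarU huBstar,
        fun h => hmBstar (h ▸ hvBstar), huv, ?_⟩
      intro W hWD hvW hWne
      have hvz : v ≠ z := fun h => hzBstar (h ▸ hvBstar)
      by_cases hzW : z ∈ W
      · have hW𝒳 : W ∈ 𝒳 := by
          refine ⟨hWD, hzW, fun he => ?_, ⟨v, hvW, hvBstar⟩⟩
          rw [he] at hvW
          exact hvz hvW
        have htr : W ∩ Bstar ∈ E := Or.inr ⟨W, hW𝒳, rfl⟩
        have htrne : W ∩ Bstar ≠ {v} := by
          intro he
          have hwtr : w ∈ W ∩ Bstar := ⟨hw𝒳 W hW𝒳, hwBstar⟩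
          rw [he] at hwtr
          exact hvw (Set.mem_singleton_iff.mp hwtr).symm
        exact (hleaf _ htr ⟨hvW, hvBstar⟩ htrne).1
      · obtain ⟨y, hyW, hyv⟩ := exists_ne_of_ne_singleton hvW hWne
        have hWZ : W ∈ Z := ⟨hWD, hzW, v, hvW, y, hyW, Ne.symm hyv⟩
        have hWB : W ⊆ Bstar := hclosed W hWZ ⟨v, hvW, hvBstar⟩
        exact hleaf W (Or.inl ⟨hWD, hWB⟩) hvW hWne
    -- trichotomy on the marked vertex m
    by_cases hGm : (Gv 𝒟 m).Nonempty
    · by_cases havoid : ∀ u, u ≠ m → ∃ W ∈ Gv 𝒟 m, u ∉ W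
      · exact key m hm ⟨hGm, havoid⟩ (Or.inl rfl)
      · -- case (c) : delete the marked vertex
        push_neg at havoid
        obtain ⟨u₀, hu₀m, hu₀⟩ := havoid
        have hu₀U : u₀ ∈ U := by
          obtain ⟨W₀, hW₀⟩ := hGm
          have hu₀W₀ := hu₀ W₀ hW₀
          obtain ⟨hW₀D, _, _⟩ := hW₀
          exact (hmem W₀ hW₀D).2 hu₀W₀
        have hmem' : ∀ W' ∈ {W' : Set V | (∃ W ∈ 𝒟, W' = W \ {m}) ∧ W'.Nonempty},
            W'.Nonempty ∧ W' ⊆ ((U.erase m : Finset V) : Set V) := by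
          rintro W' ⟨⟨W, hWD, rfl⟩, hne⟩
          refine ⟨hne, fun x hx => ?_⟩
          rw [Finset.coe_erase]
          exact ⟨(hmem W hWD).2 hx.1, hx.2⟩
        have hUC' : UC {W' : Set V | (∃ W ∈ 𝒟, W' = W \ {m}) ∧ W'.Nonempty} := by
          rintro W1' ⟨⟨W1, hW1D, rfl⟩, hne1⟩ W2' ⟨⟨W2, hW2D, rfl⟩, hne2⟩ hint
          obtain ⟨x, ⟨hx1, hxm⟩, hx2, _⟩ := hint
          refine ⟨⟨W1 ∪ W2, hUC _ hW1D _ hW2D ⟨x, hx1, hx2⟩, (Set.union_diff_distrib).symm⟩, ?_⟩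
          obtain ⟨y, hy⟩ := hne1
          exact ⟨y, Or.inl hy⟩
        have hHelly' : HellyFam {W' : Set V | (∃ W ∈ 𝒟, W' = W \ {m}) ∧ W'.Nonempty} := by
          intro 𝒮 h𝒮 h𝒮ne h𝒮pair
          have hrep : ∀ S ∈ 𝒮, ∃ W, W ∈ {W : Set V | W ∈ 𝒟 ∧ W \ {m} ∈ 𝒮 ∧ (W \ {m}).Nonempty}
              ∧ S = W \ {m} := by
            intro S hS
            obtain ⟨⟨W, hWD, rfl⟩, hne⟩ := h𝒮 S hS
            exact ⟨W, ⟨hWD, hS, hne⟩, rfl⟩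
          have hhat1 : ∀ W ∈ {W : Set V | W ∈ 𝒟 ∧ W \ {m} ∈ 𝒮 ∧ (W \ {m}).Nonempty},
              W ∈ 𝒟 := by
            rintro W ⟨hWD, _, _⟩
            exact hWD
          have hhat2 : ({W : Set V | W ∈ 𝒟 ∧ W \ {m} ∈ 𝒮 ∧ (W \ {m}).Nonempty}).Nonempty := by
            obtain ⟨S, hS⟩ := h𝒮ne
            obtain ⟨W, hW, _⟩ := hrep S hS
            exact ⟨W, hW⟩
          have hhat3 : ∀ W1 ∈ {W : Set V | W ∈ 𝒟 ∧ W \ {m} ∈ 𝒮 ∧ (W \ {m}).Nonempty},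
              ∀ W2 ∈ {W : Set V | W ∈ 𝒟 ∧ W \ {m} ∈ 𝒮 ∧ (W \ {m}).Nonempty},
              (W1 ∩ W2).Nonempty := by
            rintro W1 ⟨_, hW1S, _⟩ W2 ⟨_, hW2S, _⟩
            obtain ⟨x, hx1, hx2⟩ := h𝒮pair _ hW1S _ hW2S
            exact ⟨x, hx1.1, hx2.1⟩
          obtain ⟨p, hp⟩ := hHelly
              {W : Set V | W ∈ 𝒟 ∧ W \ {m} ∈ 𝒮 ∧ (W \ {m}).Nonempty} hhat1 hhat2 hhat3
          by_cases hpm : p = m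
          · refine ⟨u₀, ?_⟩
            rintro S hS
            obtain ⟨W, ⟨hWD, hWS, hWne⟩, rfl⟩ := hrep S hS
            have hmW : m ∈ W := hpm ▸ hp W ⟨hWD, hWS, hWne⟩
            have hWm : W ≠ {m} := by
              intro he
              rw [he] at hWne
              simp at hWne
            exact ⟨hu₀ W ⟨hWD, hmW, hWm⟩, hu₀m⟩
          · refine ⟨p, ?_⟩
            rintro S hS
            obtain ⟨W, hW, rfl⟩ := hrep S hS
            exact ⟨hp W hW, hpm⟩
        have hcard' : 2 ≤ (U.erase m).card := by
          rw [Finset.card_erase_of_mem hm]; omega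
        have hle' : (U.erase m).card ≤ n := by
          rw [Finset.card_erase_of_mem hm]; omega
        have hu₀' : u₀ ∈ U.erase m := Finset.mem_erase.mpr ⟨hu₀m, hu₀U⟩
        obtain ⟨v, hv', u, hu', hvu₀, huv, hleaf'⟩ :=
          IH (U.erase m) _ u₀ hle' hmem' hUC' hHelly' hu₀' hcard'
        have hvm' : v ≠ m := (Finset.mem_erase.mp hv').1
        refine ⟨v, Finset.mem_of_mem_erase hv', u, Finset.mem_of_mem_erase hu', hvm', huv, ?_⟩
        intro W hWD hvW hWne
        have hWm' : W \ {m} ∈ {W' : Set V | (∃ W ∈ 𝒟, W' = W \ {m}) ∧ W'.Nonempty} :=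
          ⟨⟨W, hWD, rfl⟩, ⟨v, hvW, hvm'⟩⟩
        have htrne : W \ {m} ≠ {v} := by
          intro he
          by_cases hmW : m ∈ W
          · have hWGm : W ∈ Gv 𝒟 m := by
              refine ⟨hWD, hmW, fun h => ?_⟩
              rw [h] at hvW
              exact hvm' hvW
            have hu₀W := hu₀ W hWGm
            have : u₀ ∈ W \ {m} := ⟨hu₀W, hu₀m⟩
            rw [he] at this
            exact hvu₀ (Set.mem_singleton_iff.mp this).symm
          · apply hWne
            rw [← he]
            ext x
            constructor
            · intro hx
              exact ⟨hx, fun h => hmW (h ▸ hx)⟩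
            · rintro ⟨hx, _⟩
              exact hx
        exact (hleaf' _ hWm' ⟨hvW, hvm'⟩ htrne).1
    · -- case (b)
      have hz' : 0 < (U.erase m).card := by
        rw [Finset.card_erase_of_mem hm]; omega
      obtain ⟨z, hz⟩ := Finset.card_pos.mp hz'
      have hzm : z ≠ m := (Finset.mem_erase.mp hz).1
      have hzU : z ∈ U := Finset.mem_of_mem_erase hz
      exact key z hzU (P3 z hzU hzm) (Or.inr hGm)



def ConnIn (T : SimpleGraph V) (W : Set V) : Prop :=
  ∀ a ∈ W, ∀ b ∈ W, ∃ p : T.Walk a b, ∀ x ∈ p.support, x ∈ W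

theorem tree_build [Fintype V] [DecidableEq V] : ∀ (n : ℕ) (U : Finset V) (𝒟 : Set (Set V)),
    U.card ≤ n → U.Nonempty →
    (∀ W ∈ 𝒟, W.Nonempty ∧ W ⊆ (U : Set V)) → UC 𝒟 → HellyFam 𝒟 →
    ∃ T : SimpleGraph V, (∀ x y, T.Adj x y → x ∈ U ∧ y ∈ U) ∧
      (∀ x ∈ U, ∀ y ∈ U, T.Reachable x y) ∧ T.IsAcyclic ∧ ∀ W ∈ 𝒟, ConnIn T W := by
  intro n
  induction n with
  | zero =>
    intro U 𝒟 hle hne _ _ _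
    have := Finset.card_pos.mpr hne
    omega
  | succ n IH =>
    intro U 𝒟 hle hne hmem hUC hHelly
    by_cases h1 : U.card ≤ 1
    · have hU1 : U.card = 1 := le_antisymm h1 (Finset.card_pos.mpr hne)
      obtain ⟨x, rfl⟩ := Finset.card_eq_one.mp hU1
      refine ⟨⊥, by simp, ?_, SimpleGraph.isAcyclic_bot, ?_⟩
      · intro a ha b hb
        simp only [Finset.mem_singleton] at ha hb
        subst ha; subst hb
        exact SimpleGraph.Reachable.refl _
      · intro W hW a haW b hbW
        have hWsub := (hmem W hW).2
        have hax : a = x := by simpa using hWsub haW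
        have hbx : b = x := by simpa using hWsub hbW
        subst hax
        have : a = b := hbx.symm
        subst this
        exact ⟨SimpleGraph.Walk.nil, by intro y hy; simp at hy; subst hy; exact haW⟩
    · push_neg at h1
      have h2 : 2 ≤ U.card := h1
      obtain ⟨m, hmU⟩ := hne
      obtain ⟨v, hvU, u, huU, _, huv, hleaf⟩ :=
        leaf_lemma (n + 1) U 𝒟 m hle hmem hUC hHelly hmU h2
      -- the reduced family
      have hmem' : ∀ W' ∈ {W' : Set V | (∃ W ∈ 𝒟, W' = W \ {v}) ∧ W'.Nonempty},
          W'.Nonempty ∧ W' ⊆ ((U.erase v : Finset V) : Set V) := by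
        rintro W' ⟨⟨W, hWD, rfl⟩, hne'⟩
        refine ⟨hne', fun x hx => ?_⟩
        rw [Finset.coe_erase]
        exact ⟨(hmem W hWD).2 hx.1, hx.2⟩
      have hUC' : UC {W' : Set V | (∃ W ∈ 𝒟, W' = W \ {v}) ∧ W'.Nonempty} := by
        rintro W1' ⟨⟨W1, hW1D, rfl⟩, hne1⟩ W2' ⟨⟨W2, hW2D, rfl⟩, hne2⟩ hint
        obtain ⟨x, ⟨hx1, hxm⟩, hx2, _⟩ := hint
        refine ⟨⟨W1 ∪ W2, hUC _ hW1D _ hW2D ⟨x, hx1, hx2⟩, (Set.union_diff_distrib).symm⟩, ?_⟩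
        obtain ⟨y, hy⟩ := hne1
        exact ⟨y, Or.inl hy⟩
      have hHelly' : HellyFam {W' : Set V | (∃ W ∈ 𝒟, W' = W \ {v}) ∧ W'.Nonempty} := by
        intro 𝒮 h𝒮 h𝒮ne h𝒮pair
        have hrep : ∀ S ∈ 𝒮, ∃ W, W ∈ {W : Set V | W ∈ 𝒟 ∧ W \ {v} ∈ 𝒮 ∧ (W \ {v}).Nonempty}
            ∧ S = W \ {v} := by
          intro S hS
          obtain ⟨⟨W, hWD, rfl⟩, hne'⟩ := h𝒮 S hS
          exact ⟨W, ⟨hWD, hS, hne'⟩, rfl⟩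
        have hhat1 : ∀ W ∈ {W : Set V | W ∈ 𝒟 ∧ W \ {v} ∈ 𝒮 ∧ (W \ {v}).Nonempty},
            W ∈ 𝒟 := by
          rintro W ⟨hWD, _, _⟩
          exact hWD
        have hhat2 : ({W : Set V | W ∈ 𝒟 ∧ W \ {v} ∈ 𝒮 ∧ (W \ {v}).Nonempty}).Nonempty := by
          obtain ⟨S, hS⟩ := h𝒮ne
          obtain ⟨W, hW, _⟩ := hrep S hS
          exact ⟨W, hW⟩
        have hhat3 : ∀ W1 ∈ {W : Set V | W ∈ 𝒟 ∧ W \ {v} ∈ 𝒮 ∧ (W \ {v}).Nonempty},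
            ∀ W2 ∈ {W : Set V | W ∈ 𝒟 ∧ W \ {v} ∈ 𝒮 ∧ (W \ {v}).Nonempty},
            (W1 ∩ W2).Nonempty := by
          rintro W1 ⟨_, hW1S, _⟩ W2 ⟨_, hW2S, _⟩
          obtain ⟨x, hx1, hx2⟩ := h𝒮pair _ hW1S _ hW2S
          exact ⟨x, hx1.1, hx2.1⟩
        obtain ⟨p, hp⟩ := hHelly
            {W : Set V | W ∈ 𝒟 ∧ W \ {v} ∈ 𝒮 ∧ (W \ {v}).Nonempty} hhat1 hhat2 hhat3
        by_cases hpv : p = v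
        · refine ⟨u, ?_⟩
          rintro S hS
          obtain ⟨W, ⟨hWD, hWS, hWne⟩, rfl⟩ := hrep S hS
          have hvW : v ∈ W := hpv ▸ hp W ⟨hWD, hWS, hWne⟩
          have hWv : W ≠ {v} := by
            intro he
            rw [he] at hWne
            simp at hWne
          exact ⟨hleaf W hWD hvW hWv, huv⟩
        · refine ⟨p, ?_⟩
          rintro S hS
          obtain ⟨W, hW, rfl⟩ := hrep S hS
          exact ⟨hp W hW, hpv⟩
      have hle' : (U.erase v).card ≤ n := by
        rw [Finset.card_erase_of_mem hvU]; omega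
      have hne' : (U.erase v).Nonempty := by
        apply Finset.card_pos.mp
        rw [Finset.card_erase_of_mem hvU]; omega
      obtain ⟨T', hT'edge, hT'conn, hT'acyc, hT'connin⟩ :=
        IH (U.erase v) _ hle' hne' hmem' hUC' hHelly'
      set T : SimpleGraph V := T' ⊔ SimpleGraph.fromEdgeSet {s(u, v)} with hTdef
      have hT'le : T' ≤ T := le_sup_left
      have hvnotT' : ∀ y, ¬ T'.Adj v y := by
        intro y hy
        have := (hT'edge v y hy).1
        simp at this
      have hAdjv : ∀ y, T.Adj v y → y = u := by
        intro y hy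
        rcases (SimpleGraph.sup_adj _ _ _ _).mp hy with hy' | hy'
        · exact absurd hy' (hvnotT' y)
        · obtain ⟨he, hne''⟩ := (SimpleGraph.fromEdgeSet_adj _).mp hy'
          rw [Set.mem_singleton_iff, Sym2.eq_iff] at he
          rcases he with ⟨hvu', rfl⟩ | ⟨_, rfl⟩
          · exact absurd hvu'.symm huv
          · rfl
      have hvu : T.Adj v u := by
        apply (SimpleGraph.sup_adj _ _ _ _).mpr
        right
        apply (SimpleGraph.fromEdgeSet_adj _).mpr
        refine ⟨?_, Ne.symm huv⟩
        rw [Set.mem_singleton_iff]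
        exact Sym2.eq_swap
      have hedge : ∀ x y, T.Adj x y → x ∈ U ∧ y ∈ U := by
        intro x y hxy
        rcases (SimpleGraph.sup_adj _ _ _ _).mp hxy with h | h
        · exact ⟨Finset.mem_of_mem_erase (hT'edge x y h).1,
            Finset.mem_of_mem_erase (hT'edge x y h).2⟩
        · obtain ⟨he, _⟩ := (SimpleGraph.fromEdgeSet_adj _).mp h
          rw [Set.mem_singleton_iff, Sym2.eq_iff] at he
          rcases he with ⟨rfl, rfl⟩ | ⟨rfl, rfl⟩
          · exact ⟨huU, hvU⟩
          · exact ⟨hvU, huU⟩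
      have hreach' : ∀ x ∈ U.erase v, ∀ y ∈ U.erase v, T.Reachable x y :=
        fun x hx y hy => (hT'conn x hx y hy).mono hT'le
      have huev : u ∈ U.erase v := Finset.mem_erase.mpr ⟨huv, huU⟩
      have hconn : ∀ x ∈ U, ∀ y ∈ U, T.Reachable x y := by
        intro x hx y hy
        by_cases hxv : x = v <;> by_cases hyv : y = v
        · subst hxv; subst hyv; exact SimpleGraph.Reachable.refl _
        · subst hxv
          exact (hvu.reachable).trans (hreach' u huev y (Finset.mem_erase.mpr ⟨hyv, hy⟩))
        · subst hyv
          exact (hreach' x (Finset.mem_erase.mpr ⟨hxv, hx⟩) u huev).trans hvu.symm.reachable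
        · exact hreach' x (Finset.mem_erase.mpr ⟨hxv, hx⟩) y (Finset.mem_erase.mpr ⟨hyv, hy⟩)
      have hacyc : T.IsAcyclic := by
        intro a c hc
        by_cases hvin : v ∈ c.support
        · have hc' := hc.rotate hvin
          set c' := c.rotate v hvin with hc'def
          cases hcc : c' with
          | nil =>
            rw [hcc] at hc'
            simpa using hc'.three_le_length
          | @cons _ x _ h p =>
            rw [hcc] at hc'
            have hxu : u = x := (hAdjv x h).symm
            subst hxu
            have hpnodup : p.support.Nodup := by
              have h3 := hc'.2
              rwa [SimpleGraph.Walk.support_cons, List.tail_cons] at h3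
            have hpne : u ≠ v := huv
            obtain ⟨y, h2, q, hq⟩ := SimpleGraph.Walk.exists_eq_cons_of_ne
              (Ne.symm hpne) p.reverse
            have hyu : u = y := (hAdjv y h2).symm
            subst hyu
            have hrevnodup : p.reverse.support.Nodup := by
              rw [SimpleGraph.Walk.support_reverse]
              exact List.nodup_reverse.mpr hpnodup
            rw [hq, SimpleGraph.Walk.support_cons] at hrevnodup
            have hqnodup : q.support.Nodup := (List.nodup_cons.mp hrevnodup).2
            -- q : T.Walk u u with nodup support must be nil
            have hqnil : q.length = 0 := by
              cases hq2 : q with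
              | nil => simp [hq2]
              | cons h3 r =>
                exfalso
                rw [hq2, SimpleGraph.Walk.support_cons] at hqnodup
                have := (List.nodup_cons.mp hqnodup).1
                exact this (SimpleGraph.Walk.end_mem_support r)
            have hplen : p.length = 1 := by
              have hrl : p.reverse.length = q.length + 1 := by
                rw [hq]; simp
              have := SimpleGraph.Walk.length_reverse p
              omega
            have := hc'.three_le_length
            rw [SimpleGraph.Walk.length_cons] at this
            omega
        · have hedges : ∀ e ∈ c.edges, e ∈ T'.edgeSet := by
            intro e he
            induction e with
            | h x y =>
              have hxy : T.Adj x y := c.adj_of_mem_edges he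
              have hx : x ∈ c.support := c.fst_mem_support_of_mem_edges he
              have hy : y ∈ c.support := c.snd_mem_support_of_mem_edges he
              rcases (SimpleGraph.sup_adj _ _ _ _).mp hxy with h | h
              · exact h
              · exfalso
                obtain ⟨he', _⟩ := (SimpleGraph.fromEdgeSet_adj _).mp h
                rw [Set.mem_singleton_iff, Sym2.eq_iff] at he'
                rcases he' with ⟨rfl, rfl⟩ | ⟨rfl, rfl⟩
                · exact hvin hy
                · exact hvin hx
          apply hT'acyc (c.transfer T' hedges)
          rw [SimpleGraph.Walk.isCycle_def _]
          obtain ⟨ht, hnil, hnodup⟩ := (SimpleGraph.Walk.isCycle_def _).mp hc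
          refine ⟨?_, ?_, ?_⟩
          · rw [SimpleGraph.Walk.isTrail_def, SimpleGraph.Walk.edges_transfer]
            exact ht.edges_nodup
          · intro h
            apply hnil
            have hl := SimpleGraph.Walk.length_transfer c hedges
            rw [h] at hl
            simp at hl
            cases c with
            | nil => rfl
            | cons h p => simp at hl
          · rw [SimpleGraph.Walk.support_transfer]
            exact hnodup
      refine ⟨T, hedge, hconn, hacyc, ?_⟩
      intro W hWD
      by_cases hvW : v ∈ W
      · by_cases hWv : W = {v}
        · subst hWv
          intro a haW b hbW
          have : a = b := by
            rw [Set.mem_singleton_iff] at haW hbW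
            rw [haW, hbW]
          subst this
          exact ⟨SimpleGraph.Walk.nil, by intro y hy; simp at hy; subst hy; exact haW⟩
        · have huW : u ∈ W := hleaf W hWD hvW hWv
          have hW' : W \ {v} ∈ {W' : Set V | (∃ W ∈ 𝒟, W' = W \ {v}) ∧ W'.Nonempty} :=
            ⟨⟨W, hWD, rfl⟩, ⟨u, huW, huv⟩⟩
          have hci := hT'connin _ hW'
          have key : ∀ a ∈ W, ∃ p : T.Walk a u, ∀ x ∈ p.support, x ∈ W := by
            intro a haW
            by_cases hav : a = v
            · subst hav
              refine ⟨SimpleGraph.Walk.cons hvu SimpleGraph.Walk.nil, ?_⟩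
              intro x hx
              simp only [SimpleGraph.Walk.support_cons, SimpleGraph.Walk.support_nil,
                List.mem_cons, List.mem_singleton] at hx
              rcases hx with rfl | (rfl | h)
              · exact haW
              · exact huW
              · simp at h
            · obtain ⟨p, hp⟩ := hci a ⟨haW, hav⟩ u ⟨huW, huv⟩
              have hpe : ∀ e ∈ p.edges, e ∈ T.edgeSet := fun e hee =>
                SimpleGraph.edgeSet_mono hT'le (SimpleGraph.Walk.edges_subset_edgeSet p hee)
              refine ⟨p.transfer T hpe, ?_⟩
              rw [SimpleGraph.Walk.support_transfer]
              intro x hx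
              exact (hp x hx).1
          intro a haW b hbW
          obtain ⟨pa, hpa⟩ := key a haW
          obtain ⟨pb, hpb⟩ := key b hbW
          refine ⟨pa.append pb.reverse, ?_⟩
          intro x hx
          rw [SimpleGraph.Walk.mem_support_append_iff] at hx
          rcases hx with hx | hx
          · exact hpa x hx
          · rw [SimpleGraph.Walk.support_reverse, List.mem_reverse] at hx
            exact hpb x hx
      · have hWeq : W \ {v} = W := by
          apply Set.diff_singleton_eq_self hvW
        have hW' : W ∈ {W' : Set V | (∃ W ∈ 𝒟, W' = W \ {v}) ∧ W'.Nonempty} :=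
          ⟨⟨W, hWD, hWeq.symm⟩, (hmem W hWD).1⟩
        have hci := hT'connin _ hW'
        intro a haW b hbW
        obtain ⟨p, hp⟩ := hci a (hWeq ▸ ⟨haW, fun h => hvW (h ▸ haW)⟩) b
          (hWeq ▸ ⟨hbW, fun h => hvW (h ▸ hbW)⟩)
        have hpe : ∀ e ∈ p.edges, e ∈ T.edgeSet := fun e hee =>
          SimpleGraph.edgeSet_mono hT'le (SimpleGraph.Walk.edges_subset_edgeSet p hee)
        refine ⟨p.transfer T hpe, ?_⟩
        rw [SimpleGraph.Walk.support_transfer]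
        intro x hx
        exact hp x hx


section TreeSide
variable [DecidableEq V] {T : SimpleGraph V}


noncomputable def tpath (hT : T.IsTree) (a b : V) : T.Walk a b :=
  (hT.existsUnique_path a b).choose

lemma tpath_isPath (hT : T.IsTree) (a b : V) : (tpath hT a b).IsPath :=
  (hT.existsUnique_path a b).choose_spec.1

lemma tpath_unique (hT : T.IsTree) {a b : V} (q : T.Walk a b) (hq : q.IsPath) :
    q = tpath hT a b :=
  ((hT.existsUnique_path a b).choose_spec.2 q hq).trans rfl

lemma tpath_support_subset (hT : T.IsTree) {a b : V} (q : T.Walk a b) :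
    ∀ x ∈ (tpath hT a b).support, x ∈ q.support := by
  intro x hx
  rw [← tpath_unique hT q.bypass q.bypass_isPath] at hx
  exact q.support_bypass_subset hx

def goodS (hT : T.IsTree) (S : Set V) : Prop :=
  ∀ a ∈ S, ∀ b ∈ S, ∀ x ∈ (tpath hT a b).support, x ∈ S

lemma goodS_inter {hT : T.IsTree} {S1 S2 : Set V} (h1 : goodS hT S1) (h2 : goodS hT S2) :
    goodS hT (S1 ∩ S2) := fun a ha b hb x hx =>
  ⟨h1 a ha.1 b hb.1 x hx, h2 a ha.2 b hb.2 x hx⟩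

lemma helly3 (hT : T.IsTree) {S1 S2 S3 : Set V} (g1 : goodS hT S1) (g2 : goodS hT S2)
    (g3 : goodS hT S3) {x1 x2 x3 : V} (h12 : x1 ∈ S2) (h13 : x1 ∈ S3) (h21 : x2 ∈ S1)
    (h23 : x2 ∈ S3) (h31 : x3 ∈ S1) (h32 : x3 ∈ S2) : ∃ z, z ∈ S1 ∧ z ∈ S2 ∧ z ∈ S3 := by
  have aux : ∀ (a b : V) (p : T.Walk a b), a ∈ S2 → b ∈ S1 → (∀ x ∈ p.support, x ∈ S3) →
      (∀ x ∈ p.support, x ∈ S1 ∪ S2) → ∃ z, z ∈ S1 ∧ z ∈ S2 ∧ z ∈ S3 := by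
    intro a b p
    induction p with
    | nil => intro ha hb h3 _; exact ⟨_, hb, ha, h3 _ (by simp)⟩
    | @cons a c _ h q ih =>
      intro ha hb h3 hcov
      by_cases haS1 : a ∈ S1
      · exact ⟨a, haS1, ha, h3 a (by simp)⟩
      by_cases hcS2 : c ∈ S2
      · exact ih hcS2 hb (fun x hx => h3 x (by simp [hx])) (fun x hx => hcov x (by simp [hx]))
      · have hcS1 : c ∈ S1 := by
          rcases hcov c (by simp) with h' | h'
          exacts [h', absurd h' hcS2]
        exfalso
        have hsub1 : ∀ x ∈ (tpath hT c x3).support, x ∈ S1 := g1 c hcS1 x3 h31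
        have hanotin : a ∉ (tpath hT c x3).support := fun hin => haS1 (hsub1 a hin)
        have hconspath : (SimpleGraph.Walk.cons h (tpath hT c x3)).IsPath :=
          (tpath_isPath hT c x3).cons hanotin
        have heq := tpath_unique hT _ hconspath
        have hc_in : c ∈ (tpath hT a x3).support := by
          rw [← heq]; simp
        exact hcS2 (g2 a ha x3 h32 c hc_in)
  apply aux x1 x2 (tpath hT x1 x2) h12 h21
  · exact g3 x1 h13 x2 h23
  · intro x hx
    have hsub := tpath_support_subset hT ((tpath hT x1 x3).append (tpath hT x3 x2)) x hx
    rw [SimpleGraph.Walk.mem_support_append_iff] at hsub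
    rcases hsub with h | h
    · exact Or.inr (g2 x1 h12 x3 h32 x h)
    · exact Or.inl (g1 x3 h31 x2 h21 x h)

lemma hellyN [Fintype V] (hT : T.IsTree) :
    ∀ (k : ℕ) (𝒮 : Set (Set V)), 𝒮.ncard ≤ k → 𝒮.Nonempty → (∀ S ∈ 𝒮, goodS hT S) →
    (∀ S ∈ 𝒮, ∀ S' ∈ 𝒮, (S ∩ S').Nonempty) → (⋂₀ 𝒮).Nonempty := by
  intro k
  induction k with
  | zero =>
    intro 𝒮 hcard hne _ _
    have := (Set.ncard_pos (Set.toFinite 𝒮)).mpr hne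
    omega
  | succ k IHk =>
    intro 𝒮 hcard hne hgood hpair
    obtain ⟨S0, hS0⟩ := hne
    by_cases hsing : 𝒮 = {S0}
    · obtain ⟨x, hx, _⟩ := hpair S0 hS0 S0 hS0
      refine ⟨x, ?_⟩
      rintro S hS
      rw [hsing, Set.mem_singleton_iff] at hS
      exact hS ▸ hx
    · have hex : ∃ S1 ∈ 𝒮, S1 ≠ S0 := by
        by_contra h
        push_neg at h
        apply hsing
        ext S
        exact ⟨fun hS => h S hS, fun hS => hS ▸ hS0⟩
      obtain ⟨S1, hS1, hS1ne⟩ := hex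
      have hcard' : ((fun S => S0 ∩ S) '' (𝒮 \ {S0})).ncard ≤ k := by
        have hh1 : ((fun S => S0 ∩ S) '' (𝒮 \ {S0})).ncard ≤ (𝒮 \ {S0}).ncard :=
          Set.ncard_image_le (Set.toFinite _)
        have hh2 : (𝒮 \ {S0}).ncard = 𝒮.ncard - 1 :=
          Set.ncard_diff_singleton_of_mem hS0
        have hh3 : 0 < 𝒮.ncard := (Set.ncard_pos (Set.toFinite 𝒮)).mpr ⟨S0, hS0⟩
        omega
      have hne' : ((fun S => S0 ∩ S) '' (𝒮 \ {S0})).Nonempty :=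
        ⟨_, ⟨S1, ⟨hS1, hS1ne⟩, rfl⟩⟩
      have hgood' : ∀ S ∈ (fun S => S0 ∩ S) '' (𝒮 \ {S0}), goodS hT S := by
        rintro _ ⟨S, hS, rfl⟩
        exact goodS_inter (hgood S0 hS0) (hgood S hS.1)
      have hpair' : ∀ S ∈ (fun S => S0 ∩ S) '' (𝒮 \ {S0}),
          ∀ S' ∈ (fun S => S0 ∩ S) '' (𝒮 \ {S0}), (S ∩ S').Nonempty := by
        rintro _ ⟨Sa, hSa, rfl⟩ _ ⟨Sb, hSb, rfl⟩
        obtain ⟨y1, hy1b, hy10⟩ := hpair Sb hSb.1 S0 hS0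
        obtain ⟨y2, hy2a, hy20⟩ := hpair Sa hSa.1 S0 hS0
        obtain ⟨y3, hy3a, hy3b⟩ := hpair Sa hSa.1 Sb hSb.1
        obtain ⟨z, hza, hzb, hz0⟩ := helly3 hT (hgood Sa hSa.1) (hgood Sb hSb.1)
          (hgood S0 hS0) hy1b hy10 hy2a hy20 hy3a hy3b
        exact ⟨z, ⟨hz0, hza⟩, ⟨hz0, hzb⟩⟩
      obtain ⟨z, hz⟩ := IHk _ hcard' hne' hgood' hpair'
      refine ⟨z, ?_⟩
      rintro S hS
      by_cases h : S = S0
      · subst h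
        exact (hz _ ⟨S1, ⟨hS1, hS1ne⟩, rfl⟩).1
      · exact (hz _ ⟨S, ⟨hS, h⟩, rfl⟩).2

lemma reachable_induce_of_walk {S : Set V} :
    ∀ {a b : V} (p : T.Walk a b), (∀ x ∈ p.support, x ∈ S) →
    ∀ (ha : a ∈ S) (hb : b ∈ S), (T.induce S).Reachable ⟨a, ha⟩ ⟨b, hb⟩ := by
  intro a b p
  induction p with
  | nil => intro _ ha hb; exact SimpleGraph.Reachable.refl _
  | @cons a c _ h q ih =>
    intro hp ha hb
    have hcS : c ∈ S := hp c (by simp)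
    have hadj : (T.induce S).Adj ⟨a, ha⟩ ⟨c, hcS⟩ := h
    exact hadj.reachable.trans (ih (fun x hx => hp x (by simp [hx])) hcS hb)

lemma connIn_induce_connected {S : Set V} (h : ConnIn T S) (hSne : S.Nonempty) :
    (T.induce S).Connected := by
  have : Nonempty S := hSne.to_subtype
  refine ⟨fun x y => ?_⟩
  obtain ⟨a, ha⟩ := x
  obtain ⟨b, hb⟩ := y
  obtain ⟨p, hp⟩ := h a ha b hb
  exact reachable_induce_of_walk p hp ha hb

lemma induce_connected_walk {S : Set V} (h : (T.induce S).Connected) {a b : V}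
    (ha : a ∈ S) (hb : b ∈ S) : ∃ p : T.Walk a b, ∀ x ∈ p.support, x ∈ S := by
  obtain ⟨q⟩ := h.preconnected ⟨a, ha⟩ ⟨b, hb⟩
  let f : T.induce S →g T := ⟨Subtype.val, fun {x y} h' => h'⟩
  refine ⟨q.map f, ?_⟩
  intro x hx
  rw [SimpleGraph.Walk.support_map, List.mem_map] at hx
  obtain ⟨y, _, rfl⟩ := hx
  exact y.2

lemma goodS_of_induce_connected (hT : T.IsTree) {S : Set V}
    (h : (T.induce S).Connected) : goodS hT S := by
  intro a ha b hb x hx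
  obtain ⟨p, hp⟩ := induce_connected_walk h ha hb
  exact hp x (tpath_support_subset hT p x hx)


end TreeSide
end Stmt7Aux
end Stmt7AuxSection

/-- a connected digraph is walk-Helly iff it admits a tree representation. -/
theorem stmt7 {V : Type*} [Fintype V] (A : V → V → Prop)
    (hconn : (underGraph A).Connected) :
    WalkHelly A ↔ ∃ T : SimpleGraph V, IsTreeRep A T := by
  classical
  have hVne : Nonempty V := hconn.nonempty
  constructor
  · intro hWH
    have hmem : ∀ W ∈ {S : Set V | IsWalkSet A S},
        W.Nonempty ∧ W ⊆ ((Finset.univ : Finset V) : Set V) := by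
      intro W hW
      exact ⟨Stmt7Aux.isWalkSet_nonempty hW, by simp⟩
    have hUC : Stmt7Aux.UC {S : Set V | IsWalkSet A S} :=
      fun W hW W' hW' hint => Stmt7Aux.isWalkSet_union hW hW' hint
    have hHelly : Stmt7Aux.HellyFam {S : Set V | IsWalkSet A S} :=
      fun 𝒮 h1 h2 h3 => hWH 𝒮 h2 h1 h3
    obtain ⟨x0⟩ := id hVne
    obtain ⟨T, hedge, hTconn, hacyc, hconnin⟩ :=
      Stmt7Aux.tree_build (Fintype.card V) Finset.univ {S | IsWalkSet A S}
        (by simp) ⟨x0, Finset.mem_univ _⟩ hmem hUC hHelly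
    refine ⟨T, ⟨SimpleGraph.Connected.mk
      (fun x y => hTconn x (Finset.mem_univ x) y (Finset.mem_univ y)), hacyc⟩, ?_⟩
    intro S hS
    exact Stmt7Aux.connIn_induce_connected (hconnin S hS) (Stmt7Aux.isWalkSet_nonempty hS)
  · rintro ⟨T, hTtree, hTrep⟩
    intro 𝒮 h𝒮ne h𝒮walk h𝒮pair
    exact Stmt7Aux.hellyN hTtree 𝒮.ncard 𝒮 le_rfl h𝒮ne
      (fun S hS => Stmt7Aux.goodS_of_induce_connected hTtree (hTrep S (h𝒮walk S hS))) h𝒮pair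
end
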